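/- For every real λ, every real k ≠ 0 and every θ ∈ (0, π), the perturbation-error eigenvalue of the level-dependent scheme satisfies the uniform bound |k²(e^{iθ} − 1)/(λ − k² e^{iθ})| ≤ 1/cos(θ/2). In particular, for fixed wavenumber k and fixed per-level rotation θ, the spectral radius of the perturbation-error operator is bounded independently of the number of grid points. -/

import Mathlib

open Real Complex

/-- for every real `λ`, real `k ≠ 0` and `θ ∈ (0, π)`, the
perturbation-error eigenvalue of the level-dependent scheme satisfies the
uniform bound `|k²(e^{iθ} − 1)/(λ − k² e^{iθ})| ≤ 1/cos(θ/2)`, so the spectral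
radius of the perturbation-error operator is bounded independently of the
number of grid points. -/
theorem perturbation_error_uniform_bound (lam k θ : ℝ) (hk : k ≠ 0)
    (hθ₁ : 0 < θ) (hθ₂ : θ < Real.pi) :
    ‖(k : ℂ) ^ 2 * (Complex.exp ((θ : ℂ) * Complex.I) - 1)
        / ((lam : ℂ) - (k : ℂ) ^ 2 * Complex.exp ((θ : ℂ) * Complex.I))‖
      ≤ 1 / Real.cos (θ / 2) := by
  have hk2 : (0:ℝ) < k ^ 2 := by positivity
  have hc : 0 < Real.cos (θ / 2) :=
    Real.cos_pos_of_mem_Ioo ⟨by linarith [Real.pi_pos], by linarith⟩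
  have hs : 0 < Real.sin θ := Real.sin_pos_of_pos_of_lt_pi hθ₁ hθ₂
  have hs2 : 0 ≤ Real.sin (θ / 2) :=
    Real.sin_nonneg_of_nonneg_of_le_pi (by linarith) (by linarith)
  have hexp : Complex.exp ((θ:ℂ) * Complex.I)
      = (Real.cos θ : ℂ) + (Real.sin θ : ℂ) * Complex.I := by
    rw [Complex.exp_mul_I]
    norm_num
  -- numerator
  have hnum : ‖(k : ℂ) ^ 2 * (Complex.exp ((θ : ℂ) * Complex.I) - 1)‖
      = k ^ 2 * (2 * Real.sin (θ / 2)) := by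
    rw [norm_mul, hexp]
    have h1 : ‖(k:ℂ) ^ 2‖ = k ^ 2 := by
      rw [← Complex.ofReal_pow]
      exact Complex.norm_of_nonneg (le_of_lt hk2)
    have h2 : ‖(Real.cos θ : ℂ) + (Real.sin θ : ℂ) * Complex.I - 1‖
        = 2 * Real.sin (θ / 2) := by
      rw [← Real.sqrt_sq (by positivity : (0:ℝ) ≤ 2 * Real.sin (θ/2))]
      rw [Complex.norm_def, Complex.normSq_apply]
      congr 1
      have hcos : Real.cos θ = 1 - 2 * Real.sin (θ/2) ^ 2 := by
        have h := Real.cos_two_mul (θ/2)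
        rw [show 2 * (θ/2) = θ by ring] at h
        nlinarith [Real.sin_sq_add_cos_sq (θ/2)]
      simp only [Complex.add_re, Complex.add_im, Complex.sub_re, Complex.sub_im,
        Complex.mul_re, Complex.mul_im, Complex.I_re, Complex.I_im,
        Complex.ofReal_re, Complex.ofReal_im, Complex.one_re, Complex.one_im]
      nlinarith [Real.sin_sq_add_cos_sq θ]
    rw [h1, h2]
  -- denominator lower bound
  have hden : k ^ 2 * Real.sin θ
      ≤ ‖(lam : ℂ) - (k : ℂ) ^ 2 * Complex.exp ((θ : ℂ) * Complex.I)‖ := by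
    have him : ((lam : ℂ) - (k : ℂ) ^ 2 * Complex.exp ((θ : ℂ) * Complex.I)).im
        = -(k ^ 2 * Real.sin θ) := by
      rw [hexp]
      simp only [Complex.sub_im, Complex.add_im, Complex.add_re, Complex.mul_im,
        Complex.mul_re, Complex.ofReal_re, Complex.ofReal_im, Complex.I_re,
        Complex.I_im, ← Complex.ofReal_pow]
      ring
    calc k ^ 2 * Real.sin θ
        = |((lam : ℂ) - (k : ℂ) ^ 2 * Complex.exp ((θ : ℂ) * Complex.I)).im| := by
          rw [him, abs_neg, abs_of_pos (by positivity)]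
      _ ≤ _ := Complex.abs_im_le_norm _
  have hdenpos : 0 < ‖(lam : ℂ) - (k : ℂ) ^ 2 * Complex.exp ((θ : ℂ) * Complex.I)‖ :=
    lt_of_lt_of_le (by positivity) hden
  rw [norm_div, hnum, div_le_div_iff₀ hdenpos hc]
  have hsin : Real.sin θ = 2 * Real.sin (θ/2) * Real.cos (θ/2) := by
    have := Real.sin_two_mul (θ/2)
    rw [show 2 * (θ/2) = θ by ring] at this
    linarith
  calc k ^ 2 * (2 * Real.sin (θ / 2)) * Real.cos (θ / 2)
      = k ^ 2 * Real.sin θ := by rw [hsin]; ring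
    _ ≤ _ := hden
    _ = _ := by ring_nf
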